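/- The real dimensions of the kernel and image of the tangent map DΨ of the edge-length map on the space of q-gons (at a nondegenerate polygon) are both q − 1, and they sum to 2q − 2 = dim_ℝ(ℂ^{q−1}). -/

import Mathlib

open Complex

/-- Derivative of the norm on `ℂ` (as a real inner product space) at a nonzero point. -/
lemma hasFDerivAt_norm_complex (z : ℂ) (hz : z ≠ 0) :
    HasFDerivAt (fun w : ℂ => ‖w‖) ((‖z‖)⁻¹ • innerSL ℝ z) z := by
  have hsq : HasFDerivAt (fun w : ℂ => ‖w‖ ^ 2) (2 • innerSL ℝ z) z :=
    (hasStrictFDerivAt_norm_sq z).hasFDerivAt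
  have hne : ‖z‖ ^ 2 ≠ 0 := pow_ne_zero _ (norm_ne_zero_iff.mpr hz)
  have h := hsq.sqrt hne
  have hfun : (fun w : ℂ => Real.sqrt (‖w‖ ^ 2)) = fun w : ℂ => ‖w‖ := by
    funext w; rw [Real.sqrt_sq (norm_nonneg w)]
  rw [hfun] at h
  convert h using 1
  have hzn : ‖z‖ ≠ 0 := norm_ne_zero_iff.mpr hz
  ext ξ
  simp only [ContinuousLinearMap.coe_smul', Pi.smul_apply, smul_eq_mul,
    ContinuousLinearMap.smul_apply, Real.sqrt_sq (norm_nonneg z)]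
  rw [Real.sqrt_sq (norm_nonneg z), ← Nat.cast_smul_eq_nsmul ℝ, smul_smul]
  congr 1
  push_cast
  field_simp

lemma inner_real_complex (z w : ℂ) :
    (inner ℝ z w : ℝ) = (z * (starRingEnd ℂ) w).re := by
  rw [Complex.inner]
  simp [Complex.mul_re, Complex.conj_re, Complex.conj_im]
  ring

/-- At a nondegenerate polygon, the kernel and image of the tangent map of the
fixed-perimeter edge-length map both have real dimension `q − 1`, summing to
`2q − 2 = dim_ℝ ℂ^{q−1}`. -/
theorem edge_length_map_rank_nullity
    (q : ℕ) (hq : 3 ≤ q) (P : ℝ) (Z : Fin (q - 1) → ℂ) (hZ : ∀ α, Z α ≠ 0) :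
    ∃ D : (Fin (q - 1) → ℂ) →L[ℝ] (Fin (q - 1) → ℝ) × ℝ,
      HasFDerivAt (fun W : Fin (q - 1) → ℂ =>
        ((fun α => ‖W α‖, P - ∑ α, ‖W α‖) : (Fin (q - 1) → ℝ) × ℝ)) D Z ∧
      (∀ ξ, D ξ = ((fun α => (Z α * (starRingEnd ℂ) (ξ α)).re / ‖Z α‖),
        - ∑ α, (Z α * (starRingEnd ℂ) (ξ α)).re / ‖Z α‖)) ∧
      Module.finrank ℝ (LinearMap.ker D.toLinearMap) = q - 1 ∧
      Module.finrank ℝ (LinearMap.range D.toLinearMap) = q - 1 ∧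
      (q - 1) + (q - 1) = Module.finrank ℝ (Fin (q - 1) → ℂ) := by
  set c : Fin (q - 1) → ((Fin (q - 1) → ℂ) →L[ℝ] ℝ) :=
    fun α => ((‖Z α‖)⁻¹ • innerSL ℝ (Z α)).comp (ContinuousLinearMap.proj α) with hc
  set f : (Fin (q - 1) → ℂ) →L[ℝ] (Fin (q - 1) → ℝ) := ContinuousLinearMap.pi c with hf
  set S : (Fin (q - 1) → ℝ) →L[ℝ] ℝ := ∑ α, ContinuousLinearMap.proj α with hS
  set g : (Fin (q - 1) → ℝ) →L[ℝ] (Fin (q - 1) → ℝ) × ℝ :=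
    (ContinuousLinearMap.id ℝ _).prod (-S) with hg
  have hcapp : ∀ (ξ : Fin (q - 1) → ℂ) α,
      c α ξ = (Z α * (starRingEnd ℂ) (ξ α)).re / ‖Z α‖ := by
    intro ξ α
    simp [hc, inner_real_complex, div_eq_inv_mul]
    left; ring
  have hfapp : ∀ (ξ : Fin (q - 1) → ℂ) α,
      f ξ α = (Z α * (starRingEnd ℂ) (ξ α)).re / ‖Z α‖ := by
    intro ξ α; rw [← hcapp ξ α]; simp [hf]
  have hSapp : ∀ v : Fin (q - 1) → ℝ, S v = ∑ α, v α := by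
    intro v; simp [hS, ContinuousLinearMap.sum_apply]
  have hsurj : Function.Surjective f := by
    intro v
    refine ⟨fun α => ((v α) / ‖Z α‖) • Z α, ?_⟩
    funext α
    have hzn : ‖Z α‖ ≠ 0 := norm_ne_zero_iff.mpr (hZ α)
    have hzn' : ‖Z α‖ ≠ 0 := hzn
    have h1 : f (fun β => ((v β) / ‖Z β‖) • Z β) α
        = ‖Z α‖⁻¹ * (inner ℝ (Z α) (((v α) / ‖Z α‖) • Z α) : ℝ) := rfl
    rw [h1, real_inner_smul_right, real_inner_self_eq_norm_sq, sq]
    field_simp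
  have hginj : Function.Injective g := by
    intro v w h
    have := congrArg Prod.fst h
    simpa [hg] using this
  have hrange : LinearMap.range (g.comp f).toLinearMap = LinearMap.range g.toLinearMap := by
    ext y
    simp only [LinearMap.mem_range, ContinuousLinearMap.coe_comp', Function.comp_apply]
    constructor
    · rintro ⟨x, rfl⟩; exact ⟨f x, rfl⟩
    · rintro ⟨v, rfl⟩; obtain ⟨x, rfl⟩ := hsurj v; exact ⟨x, rfl⟩
  have hrangeg : LinearMap.range g.toLinearMap = LinearMap.range (g : (Fin (q - 1) → ℝ) →ₗ[ℝ] _) := rfl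
  have hrk : Module.finrank ℝ (LinearMap.range (g.comp f).toLinearMap) = q - 1 := by
    rw [hrange, hrangeg, LinearMap.finrank_range_of_inj hginj]
    simp
  refine ⟨g.comp f, ?_, ?_, ?_, hrk, ?_⟩
  · -- HasFDerivAt
    have h1 : ∀ α, HasFDerivAt (fun W : Fin (q - 1) → ℂ => ‖W α‖) (c α) Z :=
      fun α => (hasFDerivAt_norm_complex (Z α) (hZ α)).comp Z (hasFDerivAt_apply α Z)
    have hpi : HasFDerivAt (fun (W : Fin (q - 1) → ℂ) (α : Fin (q - 1)) => ‖W α‖) f Z :=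
      hasFDerivAt_pi.mpr h1
    have hsum' : HasFDerivAt (fun W : Fin (q - 1) → ℂ => ∑ α, ‖W α‖) (∑ α, c α) Z :=
      HasFDerivAt.fun_sum (fun α _ => h1 α)
    have hsum : HasFDerivAt (fun W : Fin (q - 1) → ℂ => P - ∑ α, ‖W α‖) (-S.comp f) Z := by
      have h2 := (hasFDerivAt_const P Z).sub hsum'
      have heq : (0 : (Fin (q - 1) → ℂ) →L[ℝ] ℝ) - ∑ α, c α = -S.comp f := by
        ext ξ
        simp only [ContinuousLinearMap.sub_apply, ContinuousLinearMap.zero_apply,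
          ContinuousLinearMap.sum_apply, ContinuousLinearMap.neg_apply,
          ContinuousLinearMap.comp_apply, hSapp, zero_sub, neg_inj]
        exact Finset.sum_congr rfl fun d _ => rfl
      rw [heq] at h2
      exact h2
    have hprod := HasFDerivAt.prodMk hpi hsum
    have hD : g.comp f = f.prod (-S.comp f) := by
      ext ξ
      · simp [hg]
      · simp [hg]
    rw [hD]
    exact hprod
  · -- formula
    intro ξ
    refine Prod.ext ?_ ?_
    · funext α
      simp [hg, hfapp]
    · simp only [ContinuousLinearMap.comp_apply, hg, ContinuousLinearMap.prod_apply,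
        ContinuousLinearMap.neg_apply, ContinuousLinearMap.coe_id', id_eq, hSapp, hfapp]
  · -- kernel dimension
    have hker : LinearMap.ker (g.comp f).toLinearMap
        = LinearMap.ker ((g.comp f : (Fin (q - 1) → ℂ) →L[ℝ] (Fin (q - 1) → ℝ) × ℝ)
          : (Fin (q - 1) → ℂ) →ₗ[ℝ] (Fin (q - 1) → ℝ) × ℝ) := rfl
    have hrange' : LinearMap.range (g.comp f).toLinearMap
        = LinearMap.range ((g.comp f : (Fin (q - 1) → ℂ) →L[ℝ] (Fin (q - 1) → ℝ) × ℝ)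
          : (Fin (q - 1) → ℂ) →ₗ[ℝ] (Fin (q - 1) → ℝ) × ℝ) := rfl
    have hdom : Module.finrank ℝ (Fin (q - 1) → ℂ) = 2 * (q - 1) := by
      rw [Module.finrank_pi_fintype]
      simp [Complex.finrank_real_complex, two_mul, mul_comm]
    have hrn := LinearMap.finrank_range_add_finrank_ker
      ((g.comp f) : (Fin (q - 1) → ℂ) →ₗ[ℝ] (Fin (q - 1) → ℝ) × ℝ)
    rw [hdom, ← hrange', ← hker, hrk] at hrn
    omega
  · -- dimension count
    rw [Module.finrank_pi_fintype]
    simp [Complex.finrank_real_complex]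
    omega
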